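/- Let A be a t-intersecting family of r-element subsets of the ordered set {v_1,…,v_n}, let W = {v_{n−t+1},…,v_n}, and suppose the complex generated by A is shifted, r > t, and n > r + t. Then for every subset U ⊆ W with |U| > r − t, no member σ of A satisfies σ ∩ W = U. -/

import Mathlib

/-- Case 1 of the shifted EKR argument: if the complex generated by a shifted
`t`-intersecting family `A` of `r`-sets is shifted, `r > t` and `n > r + t`,
then no member of `A` meets the top `t` vertices `W` in a set `U` with
`|U| > r - t` (i.e. `r < |U| + t`). -/
theorem no_large_top_intersection (n t r : ℕ) (htr : t < r) (hn : r + t < n)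
    (A : Finset (Finset (Fin n)))
    (hr : ∀ X ∈ A, X.card = r)
    (hint : ∀ X ∈ A, ∀ Y ∈ A, t ≤ (X ∩ Y).card)
    (hshift : ∀ σ : Finset (Fin n), (∃ a ∈ A, σ ⊆ a) →
      ∀ i ∈ σ, ∀ j, j < i → ∃ a ∈ A, insert j (σ.erase i) ⊆ a) :
    ∀ U ⊆ Finset.univ.filter (fun x : Fin n => n - t ≤ (x : ℕ)),
      r < U.card + t →
        ∀ σ ∈ A, σ ∩ Finset.univ.filter (fun x : Fin n => n - t ≤ (x : ℕ)) ≠ U := by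
  intro U hUW hUcard σ hσA hσU
  set W := Finset.univ.filter (fun x : Fin n => n - t ≤ (x : ℕ)) with hWdef
  rcases Nat.eq_zero_or_pos t with ht0 | htpos
  · -- t = 0 : then W = ∅, U = ∅, and r < 0 is absurd
    have hWempty : W = ∅ := by
      apply Finset.filter_false_of_mem
      intro x _
      subst ht0
      simp only [Nat.sub_zero]
      exact fun h => absurd x.isLt (not_lt.mpr h)
    have : U = ∅ := Finset.subset_empty.mp (hWempty ▸ hUW)
    subst this
    simp [ht0] at hUcard
  have hUσ : U ⊆ σ := hσU ▸ Finset.inter_subset_left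
  have hσr : σ.card = r := hr σ hσA
  -- number of vertices below n - t
  have hBcard : (Finset.univ.filter (fun x : Fin n => (x : ℕ) < n - t)).card = n - t := by
    have hlt : n - t < n := by omega
    have : Finset.univ.filter (fun x : Fin n => (x : ℕ) < n - t) = Finset.Iio ⟨n - t, hlt⟩ := by
      ext x
      simp [Fin.lt_def]
    rw [this, Fin.card_Iio]
  -- the part of σ below n - t has r - U.card elements
  have hσlow : (σ.filter (fun x : Fin n => (x : ℕ) < n - t)).card + U.card = r := by
    have h1 : σ.filter (fun x : Fin n => (x : ℕ) < n - t) = σ \ W := by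
      ext x
      simp only [Finset.mem_filter, Finset.mem_sdiff, hWdef, Finset.mem_univ, true_and]
      constructor
      · rintro ⟨h1, h2⟩; exact ⟨h1, by omega⟩
      · rintro ⟨h1, h2⟩; exact ⟨h1, by omega⟩
    rw [h1, ← hσU]
    rw [Finset.card_sdiff_add_card_inter, hσr]
  -- main induction: we can replace any k elements of U by fresh low vertices
  have key : ∀ k, k ≤ U.card → ∃ S T : Finset (Fin n), S ⊆ U ∧ S.card = k ∧
      T.card = k ∧ (∀ x ∈ T, (x : ℕ) < n - t) ∧ Disjoint T σ ∧ (σ \ S) ∪ T ∈ A := by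
    intro k
    induction k with
    | zero =>
      intro _
      exact ⟨∅, ∅, Finset.empty_subset _, rfl, rfl, by simp, by simp, by simpa using hσA⟩
    | succ k ih =>
      intro hk
      obtain ⟨S, T, hSU, hScard, hTcard, hTlt, hTσ, hτA⟩ := ih (Nat.le_of_succ_le hk)
      set τ := (σ \ S) ∪ T with hτdef
      -- pick i ∈ U \ S
      have hUS : ∃ i ∈ U, i ∉ S := by
        by_contra h
        push_neg at h
        have : U ⊆ S := h
        have := Finset.card_le_card this
        omega
      obtain ⟨i, hiU, hiS⟩ := hUS
      have hiW : i ∈ W := hUW hiU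
      have hige : n - t ≤ (i : ℕ) := by
        simpa [hWdef] using hiW
      have hiτ : i ∈ τ := by
        simp only [hτdef, Finset.mem_union, Finset.mem_sdiff]
        exact Or.inl ⟨hUσ hiU, hiS⟩
      -- pick a fresh j below n - t, outside σ and T
      have hfresh : ∃ j : Fin n, (j : ℕ) < n - t ∧ j ∉ σ ∧ j ∉ T := by
        by_contra h
        push_neg at h
        -- then every low vertex is in σ ∪ T
        have hsub : Finset.univ.filter (fun x : Fin n => (x : ℕ) < n - t) ⊆
            (σ.filter (fun x : Fin n => (x : ℕ) < n - t)) ∪ T := by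
          intro x hx
          simp only [Finset.mem_filter, Finset.mem_univ, true_and] at hx
          by_cases hxσ : x ∈ σ
          · exact Finset.mem_union_left _ (Finset.mem_filter.mpr ⟨hxσ, hx⟩)
          · exact Finset.mem_union_right _ (h x hx hxσ)
        have hle := Finset.card_le_card hsub
        have hle2 := Finset.card_union_le (σ.filter (fun x : Fin n => (x : ℕ) < n - t)) T
        rw [hBcard] at hle
        have hUcardW := Finset.card_le_card hUW
        have hkU : k < U.card := hk
        omega
      obtain ⟨j, hjlt, hjσ, hjT⟩ := hfresh
      have hji : j < i := by
        rw [Fin.lt_def]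
        omega
      obtain ⟨a, haA, hsub⟩ := hshift τ ⟨τ, hτA, Finset.Subset.refl τ⟩ i hiτ j hji
      -- cardinalities
      have hiT : i ∉ T := by
        intro h
        have := hTlt i h
        omega
      have hjτ : j ∉ τ := by
        simp only [hτdef, Finset.mem_union, Finset.mem_sdiff]
        rintro (⟨h1, _⟩ | h1)
        · exact hjσ h1
        · exact hjT h1
      have hτcard : τ.card = r := by
        rw [hτdef, Finset.card_union_of_disjoint, Finset.card_sdiff_of_subset (Finset.Subset.trans hSU hUσ),
          hσr, hScard, hTcard]
        · have hUcardσ := Finset.card_le_card hUσ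
          have hSUcard := Finset.card_le_card hSU
          omega
        · exact hTσ.symm.mono_left Finset.sdiff_subset
      have hnewcard : (insert j (τ.erase i)).card = r := by
        rw [Finset.card_insert_of_notMem (fun h => hjτ (Finset.mem_of_mem_erase h)),
          Finset.card_erase_of_mem hiτ, hτcard]
        omega
      have haeq : insert j (τ.erase i) = a := by
        apply Finset.eq_of_subset_of_card_le hsub
        rw [hr a haA, hnewcard]
      refine ⟨insert i S, insert j T, ?_, ?_, ?_, ?_, ?_, ?_⟩
      · exact Finset.insert_subset hiU hSU
      · rw [Finset.card_insert_of_notMem hiS, hScard]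
      · rw [Finset.card_insert_of_notMem hjT, hTcard]
      · intro x hx
        rcases Finset.mem_insert.mp hx with h | h
        · subst h; exact hjlt
        · exact hTlt x h
      · rw [Finset.disjoint_left]
        intro x hx hxσ
        rcases Finset.mem_insert.mp hx with h | h
        · subst h; exact hjσ hxσ
        · exact (Finset.disjoint_left.mp hTσ) h hxσ
      · have : (σ \ insert i S) ∪ insert j T = insert j (τ.erase i) := by
          ext x
          simp only [hτdef, Finset.mem_union, Finset.mem_sdiff, Finset.mem_insert,
            Finset.mem_erase]
          constructor
          · rintro (⟨hxσ, hxS⟩ | (rfl | hxT))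
            · push_neg at hxS
              exact Or.inr ⟨hxS.1, Or.inl ⟨hxσ, hxS.2⟩⟩
            · exact Or.inl rfl
            · refine Or.inr ⟨?_, Or.inr hxT⟩
              intro h; subst h; exact hiT hxT
          · rintro (rfl | ⟨hxi, (⟨hxσ, hxS⟩ | hxT)⟩)
            · exact Or.inr (Or.inl rfl)
            · exact Or.inl ⟨hxσ, by simp [hxi, hxS]⟩
            · exact Or.inr (Or.inr hxT)
        rw [this, haeq]
        exact haA
  obtain ⟨S, T, hSU, hScard, hTcard, hTlt, hTσ, hτA⟩ := key U.card le_rfl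
  have hSeqU : S = U := Finset.eq_of_subset_of_card_le hSU (by omega)
  subst hSeqU
  have hτint : σ ∩ ((σ \ S) ∪ T) = σ \ S := by
    ext x
    simp only [Finset.mem_inter, Finset.mem_union, Finset.mem_sdiff]
    constructor
    · rintro ⟨hxσ, (h | h)⟩
      · exact h
      · exact absurd hxσ (Finset.disjoint_left.mp hTσ h)
    · rintro ⟨h1, h2⟩
      exact ⟨h1, Or.inl ⟨h1, h2⟩⟩
  have hge := hint σ hσA _ hτA
  rw [hτint] at hge
  have hcard : (σ \ S).card + S.card = σ.card := Finset.card_sdiff_add_card_eq_card hUσ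
  omega
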